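/- arXiv:0912.0020 — 6 statements merged into one kernel-verified Lean document; each statement's English description precedes it below -/
import Mathlib

section
/- For any algebra A, there exists a positive integer n with A_[n] = {0} if and only if there exists a positive integer n with A_(n) = {0}; moreover, if N_1 and N_2 are the least such integers respectively, then N_1 ≤ N_2 ≤ 2^{N_1 - 2} + 1 (when N_1 ≥ 2). -/
variable (k : Type*) [CommRing k]

/-- The product of two submodules of a not-necessarily-associative `k`-algebra `A`:
the `k`-submodule spanned by all products `b * c` with `b ∈ B`, `c ∈ C`. -/
def subMul {A : Type*} [NonUnitalNonAssocRing A] [Module k A]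
    [SMulCommClass k A A] [IsScalarTower k A A] (B C : Submodule k A) : Submodule k A :=
  Submodule.span k {z | ∃ b ∈ B, ∃ c ∈ C, z = b * c}

variable (A : Type*) [NonUnitalNonAssocRing A] [Module k A]
  [SMulCommClass k A A] [IsScalarTower k A A]

/-- `weakSeries k A n` is the submodule `A_[n+1]` of the paper:
`A_[1] = A`, `A_[n+1] = A·A_[n] + A_[n]·A`. -/
def weakSeries : ℕ → Submodule k A
  | 0 => ⊤
  | n + 1 => subMul k ⊤ (weakSeries n) ⊔ subMul k (weakSeries n) ⊤

/-- `strongSeries k A n` is the submodule `A_(n+1)` of the paper: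
`A_(1) = A`, `A_(n+1) = Σ_{0<m<n+1} A_(m)·A_(n+1-m)`. -/
def strongSeries : ℕ → Submodule k A
  | 0 => ⊤
  | n + 1 => ⨆ m : Fin (n + 1), subMul k (strongSeries m) (strongSeries (n - (m : ℕ)))
  decreasing_by
  · exact m.isLt
  · exact Nat.lt_succ_of_le (Nat.sub_le n m)

lemma subMul_mono {A : Type*} [NonUnitalNonAssocRing A] [Module k A]
    [SMulCommClass k A A] [IsScalarTower k A A] {B B' C C' : Submodule k A}
    (hB : B ≤ B') (hC : C ≤ C') : subMul k B C ≤ subMul k B' C' := by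
  apply Submodule.span_mono
  rintro z ⟨b, hb, c, hc, rfl⟩
  exact ⟨b, hB hb, c, hC hc, rfl⟩

lemma weakSeries_zero : weakSeries k A 0 = ⊤ := rfl

lemma weak_le_strong : ∀ n, weakSeries k A n ≤ strongSeries k A n
  | 0 => le_of_eq (by rw [weakSeries_zero, strongSeries])
  | (n + 1) => by
    rw [weakSeries, strongSeries]
    apply sup_le
    · refine le_trans ?_ (le_iSup _ (⟨0, Nat.succ_pos n⟩ : Fin (n + 1)))
      simp only [Fin.val_mk, Nat.sub_zero]
      exact subMul_mono k (le_of_eq (by rw [strongSeries])) (weak_le_strong n)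
    · refine le_trans ?_ (le_iSup _ (⟨n, Nat.lt_succ_self n⟩ : Fin (n + 1)))
      simp only [Fin.val_mk, Nat.sub_self]
      exact subMul_mono k (weak_le_strong n) (le_of_eq (by rw [strongSeries]))

lemma strong_le_weak : ∀ m n, 2 ^ m ≤ n → strongSeries k A n ≤ weakSeries k A (m + 1) := by
  intro m
  induction m with
  | zero =>
    intro n hn
    obtain ⟨t, rfl⟩ : ∃ t, n = t + 1 := ⟨n - 1, by omega⟩
    rw [strongSeries]
    apply iSup_le
    intro j
    rw [show (0 : ℕ) + 1 = 1 from rfl, weakSeries, weakSeries_zero]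
    refine le_trans ?_ le_sup_left
    exact subMul_mono k le_top le_top
  | succ m' ih =>
    intro n hn
    obtain ⟨t, rfl⟩ : ∃ t, n = t + 1 := ⟨n - 1, by have := Nat.one_le_two_pow (n := m' + 1); omega⟩
    rw [strongSeries]
    apply iSup_le
    intro j
    have hj : (j : ℕ) ≤ t := Nat.lt_succ_iff.mp j.isLt
    have hpow : 2 * 2 ^ m' ≤ t + 1 := by
      have := hn; rwa [pow_succ, mul_comm] at this
    have hsplit : 2 ^ m' ≤ (j : ℕ) ∨ 2 ^ m' ≤ t - (j : ℕ) := by omega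
    rw [weakSeries]
    rcases hsplit with h | h
    · refine le_trans ?_ le_sup_right
      exact subMul_mono k (ih _ h) le_top
    · refine le_trans ?_ le_sup_left
      exact subMul_mono k le_top (ih _ h)

/-- `A` satisfies `A_[n] = 0` for some `n ≥ 1` iff it satisfies `A_(n) = 0` for
some `n ≥ 1`; and if `N₁`, `N₂` are the least such indices, then `N₁ ≤ N₂`, and moreover
`N₂ ≤ 2^(N₁ - 2) + 1` when `N₁ ≥ 2`.  (Here `weakSeries k A (n-1) = A_[n]` and
`strongSeries k A (n-1) = A_(n)`.) -/
theorem weakSeries_bot_iff_strongSeries_bot :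
    ((∃ n : ℕ, weakSeries k A n = ⊥) ↔ (∃ n : ℕ, strongSeries k A n = ⊥)) ∧
    (∀ N₁ N₂ : ℕ, 1 ≤ N₁ → 1 ≤ N₂ →
      weakSeries k A (N₁ - 1) = ⊥ →
      (∀ m : ℕ, 1 ≤ m → m < N₁ → weakSeries k A (m - 1) ≠ ⊥) →
      strongSeries k A (N₂ - 1) = ⊥ →
      (∀ m : ℕ, 1 ≤ m → m < N₂ → strongSeries k A (m - 1) ≠ ⊥) →
      N₁ ≤ N₂ ∧ (2 ≤ N₁ → N₂ ≤ 2 ^ (N₁ - 2) + 1)) := by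
  constructor
  · constructor
    · rintro ⟨n, hn⟩
      match n, hn with
      | 0, hn => exact ⟨0, by rw [strongSeries, ← weakSeries_zero k A]; exact hn⟩
      | (m + 1), hn =>
        exact ⟨2 ^ m, le_bot_iff.mp (hn ▸ strong_le_weak k A m (2 ^ m) le_rfl)⟩
    · rintro ⟨n, hn⟩
      exact ⟨n, le_bot_iff.mp (hn ▸ weak_le_strong k A n)⟩
  · intro N₁ N₂ hN₁ hN₂ hW hWmin hS hSmin
    have h12 : N₁ ≤ N₂ := by
      by_contra h
      exact hWmin N₂ hN₂ (by omega) (le_bot_iff.mp (hS ▸ weak_le_strong k A (N₂ - 1)))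
    refine ⟨h12, fun h2 => ?_⟩
    by_contra h
    refine hSmin (2 ^ (N₁ - 2) + 1) (Nat.le_add_left 1 _) (not_le.mp h) ?_
    have : strongSeries k A (2 ^ (N₁ - 2)) ≤ weakSeries k A ((N₁ - 2) + 1) :=
      strong_le_weak k A (N₁ - 2) _ le_rfl
    rw [show (N₁ - 2) + 1 = N₁ - 1 by omega, hW] at this
    simpa using le_bot_iff.mp this
end

section
/- Let A be the k-algebra that is free as a k-module on basis {x_1, …, x_{n-1}} with multiplication x_m x_m = x_{m+1} for 1 ≤ m ≤ n-2 and all other products of basis elements zero. Then the least N_1 with A_[N_1] = {0} equals n, and the least N_2 with A_(N_2) = {0} equals 2^{n-2} + 1, so the bound N_2 ≤ 2^{N_1-2}+1 is achieved. -/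
variable (k : Type*) [CommRing k]

variable (A : Type*) [NonUnitalNonAssocRing A] [Module k A]
  [SMulCommClass k A A] [IsScalarTower k A A]

section helpers

variable {k A}

lemma subMul_le {B C D : Submodule k A}
    (h : ∀ x ∈ B, ∀ y ∈ C, x * y ∈ D) : subMul k B C ≤ D := by
  apply Submodule.span_le.2
  rintro z ⟨x, hx, y, hy, rfl⟩
  exact h x hx y hy

lemma mul_mem_subMul {B C : Submodule k A} {x y : A} (hx : x ∈ B) (hy : y ∈ C) :
    x * y ∈ subMul k B C :=
  Submodule.subset_span ⟨x, hx, y, hy, rfl⟩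

lemma mul_span_span_mem (S T : Set A) (D : Submodule k A)
    (h : ∀ a ∈ S, ∀ c ∈ T, a * c ∈ D) :
    ∀ x ∈ Submodule.span k S, ∀ y ∈ Submodule.span k T, x * y ∈ D := by
  intro x hx
  induction hx using Submodule.span_induction with
  | mem a ha =>
    intro y hy
    induction hy using Submodule.span_induction with
    | mem c hc => exact h a ha c hc
    | zero => simpa using D.zero_mem
    | add u v _ _ hu hv => simpa [mul_add] using D.add_mem hu hv
    | smul r u _ hu => simpa [mul_smul_comm] using D.smul_mem r hu
  | zero => intro y hy; simpa using D.zero_mem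
  | add u v _ _ hu hv => intro y hy; simpa [add_mul] using D.add_mem (hu y hy) (hv y hy)
  | smul r u _ hu => intro y hy; simpa [smul_mul_assoc] using D.smul_mem r (hu y hy)

variable {N : ℕ} (b : Module.Basis (Fin N) k A)

/-- span of the basis vectors whose index lies in `s`. -/
def VV (s : Set ℕ) : Submodule k A := Submodule.span k (b '' {i : Fin N | (i : ℕ) ∈ s})

lemma VV_congr {s t : Set ℕ} (h : ∀ j, j < N → (j ∈ s ↔ j ∈ t)) : VV b s = VV b t := by
  have hs : {i : Fin N | (i : ℕ) ∈ s} = {i : Fin N | (i : ℕ) ∈ t} := by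
    ext i; exact h i i.isLt
  unfold VV
  rw [hs]

lemma VV_top {s : Set ℕ} (h : ∀ j, j < N → j ∈ s) : VV b s = ⊤ := by
  unfold VV
  have : {i : Fin N | (i : ℕ) ∈ s} = Set.univ := by
    ext i; simpa using h i i.isLt
  rw [this, Set.image_univ, b.span_eq]

lemma VV_bot {s : Set ℕ} (h : ∀ j, j < N → j ∉ s) : VV b s = ⊥ := by
  unfold VV
  have : {i : Fin N | (i : ℕ) ∈ s} = ∅ := by
    ext i; simpa using h i i.isLt
  rw [this, Set.image_empty, Submodule.span_empty]

lemma mem_VV {s : Set ℕ} (i : Fin N) (hi : (i : ℕ) ∈ s) : b i ∈ VV b s :=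
  Submodule.subset_span ⟨i, hi, rfl⟩

lemma VV_ne_bot [Nontrivial k] {s : Set ℕ} (j : ℕ) (hj : j < N) (hjs : j ∈ s) :
    VV b s ≠ ⊥ := by
  intro h
  have := mem_VV b (⟨j, hj⟩ : Fin N) hjs
  rw [h, Submodule.mem_bot] at this
  exact b.ne_zero _ this

variable (hmul : ∀ (i : Fin N) (hi : (i : ℕ) + 1 < N), b i * b i = b ⟨(i : ℕ) + 1, hi⟩)
  (hzero : ∀ i j : Fin N, (i ≠ j ∨ (i : ℕ) + 1 = N) → b i * b j = 0)

include hmul hzero in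
lemma subMul_VV (s t : Set ℕ) :
    subMul k (VV b s) (VV b t) = VV b {j | ∃ i, i ∈ s ∧ i ∈ t ∧ j = i + 1} := by
  apply le_antisymm
  · apply subMul_le
    apply mul_span_span_mem
    rintro x ⟨i, hi, rfl⟩ y ⟨j, hj, rfl⟩
    by_cases hij : i = j
    · subst hij
      by_cases hlt : (i : ℕ) + 1 < N
      · rw [hmul i hlt]
        exact mem_VV b _ ⟨i, hi, hj, rfl⟩
      · have : (i : ℕ) + 1 = N := by omega
        rw [hzero i i (Or.inr this)]
        exact Submodule.zero_mem _
    · rw [hzero i j (Or.inl hij)]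
      exact Submodule.zero_mem _
  · apply Submodule.span_le.2
    rintro x ⟨j, ⟨i, his, hit, hji⟩, rfl⟩
    have hiN : i + 1 < N := by have := j.isLt; omega
    have hii : i < N := by omega
    have : b j = b ⟨i, hii⟩ * b ⟨i, hii⟩ := by
      rw [hmul ⟨i, hii⟩ hiN]
      congr 1
      exact Fin.ext hji
    rw [this]
    exact mul_mem_subMul (mem_VV b _ his) (mem_VV b _ hit)

lemma iSup_VV {ι : Sort*} (F : ι → Set ℕ) : (⨆ a : ι, VV b (F a)) = VV b (⋃ a, F a) := by
  unfold VV
  rw [← Submodule.span_iUnion]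
  congr 1
  ext x
  simp only [Set.mem_iUnion, Set.mem_image, Set.mem_setOf_eq]
  tauto

end helpers

section main

variable {k A}
variable {N : ℕ} (b : Module.Basis (Fin N) k A)
  (hmul : ∀ (i : Fin N) (hi : (i : ℕ) + 1 < N), b i * b i = b ⟨(i : ℕ) + 1, hi⟩)
  (hzero : ∀ i j : Fin N, (i ≠ j ∨ (i : ℕ) + 1 = N) → b i * b j = 0)

include hmul hzero in
lemma weakSeries_eq (m : ℕ) : weakSeries k A m = VV b {j | m ≤ j} := by
  induction m with
  | zero => rw [weakSeries]; exact (VV_top b fun j _ => Nat.zero_le j).symm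
  | succ m ih =>
    rw [weakSeries, ih]
    have htop : (⊤ : Submodule k A) = VV b Set.univ := (VV_top b fun _ _ => trivial).symm
    rw [htop, subMul_VV b hmul hzero, subMul_VV b hmul hzero]
    have e1 : VV b {j | ∃ i, i ∈ (Set.univ : Set ℕ) ∧ i ∈ {j | m ≤ j} ∧ j = i + 1}
        = VV b {j | m + 1 ≤ j} := by
      apply VV_congr
      intro j _
      simp only [Set.mem_setOf_eq, Set.mem_univ, true_and]
      constructor
      · rintro ⟨i, hi, rfl⟩; omega
      · intro hj; exact ⟨j - 1, by omega, by omega⟩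
    have e2 : VV b {j | ∃ i, i ∈ {j | m ≤ j} ∧ i ∈ (Set.univ : Set ℕ) ∧ j = i + 1}
        = VV b {j | m + 1 ≤ j} := by
      apply VV_congr
      intro j _
      simp only [Set.mem_setOf_eq, Set.mem_univ, true_and]
      constructor
      · rintro ⟨i, hi, rfl⟩; omega
      · intro hj; exact ⟨j - 1, by omega, by omega⟩
    rw [e1, e2, sup_idem]

include hmul hzero in
lemma strongSeries_eq (m : ℕ) : strongSeries k A m = VV b {j | m < 2 ^ j} := by
  induction m using Nat.strong_induction_on with
  | _ m ih =>
    match m with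
    | 0 =>
      rw [strongSeries]
      exact (VV_top b fun j _ => Nat.two_pow_pos j).symm
    | m + 1 =>
      rw [strongSeries]
      have key : ∀ a : Fin (m + 1),
          subMul k (strongSeries k A (a : ℕ)) (strongSeries k A (m - (a : ℕ)))
          = VV b {j | ∃ i, i ∈ {j | (a : ℕ) < 2 ^ j} ∧ i ∈ {j | m - (a : ℕ) < 2 ^ j}
              ∧ j = i + 1} := by
        intro a
        rw [ih (a : ℕ) (by omega), ih (m - (a : ℕ)) (by omega),
          subMul_VV b hmul hzero]
      rw [iSup_congr key, iSup_VV]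
      apply VV_congr
      intro j _
      simp only [Set.mem_iUnion, Set.mem_setOf_eq]
      constructor
      · rintro ⟨a, i, h1, h2, rfl⟩
        have ha : (a : ℕ) < m + 1 := a.isLt
        have h2p : 2 ^ (i + 1) = 2 * 2 ^ i := by rw [pow_succ]; ring
        omega
      · intro hj
        match j with
        | 0 => simp at hj
        | i + 1 =>
          have h2p : 2 ^ (i + 1) = 2 * 2 ^ i := by rw [pow_succ]; ring
          refine ⟨⟨(m + 1) / 2, by omega⟩, i, ?_, ?_, rfl⟩
          · simp only [Fin.val_mk]; omega
          · simp only [Fin.val_mk]; omega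

end main

/-- if `A` is free as a `k`-module on a basis `x_1, …, x_{n-1}` (indexed here by
`Fin (n-1)`), with `x_m x_m = x_{m+1}` for `1 ≤ m ≤ n-2` and all other products of basis
elements zero, then the least `N₁` with `A_[N₁] = 0` is `n`, and the least `N₂` with
`A_(N₂) = 0` is `2^(n-2) + 1`, so the bound `N₂ ≤ 2^(N₁-2) + 1` is achieved.
(Indices are shifted by one: `weakSeries k A (m-1) = A_[m]`, `strongSeries k A (m-1) = A_(m)`.) -/
theorem weakSeries_strongSeries_of_basis [Nontrivial k] (n : ℕ) (hn : 2 ≤ n)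
    (b : Module.Basis (Fin (n - 1)) k A)
    (hmul : ∀ (i : Fin (n - 1)) (hi : (i : ℕ) + 1 < n - 1), b i * b i = b ⟨(i : ℕ) + 1, hi⟩)
    (hzero : ∀ i j : Fin (n - 1), (i ≠ j ∨ (i : ℕ) + 1 = n - 1) → b i * b j = 0) :
    (weakSeries k A (n - 1) = ⊥ ∧ ∀ m : ℕ, m < n - 1 → weakSeries k A m ≠ ⊥) ∧
    (strongSeries k A (2 ^ (n - 2)) = ⊥ ∧
      ∀ m : ℕ, m < 2 ^ (n - 2) → strongSeries k A m ≠ ⊥) := by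
  refine ⟨⟨?_, ?_⟩, ?_, ?_⟩
  · rw [weakSeries_eq b hmul hzero]
    exact VV_bot b fun j hj => by simp only [Set.mem_setOf_eq]; omega
  · intro m hm
    rw [weakSeries_eq b hmul hzero]
    exact VV_ne_bot b m hm (le_refl m)
  · rw [strongSeries_eq b hmul hzero]
    apply VV_bot b
    intro j hj
    simp only [Set.mem_setOf_eq, not_lt]
    exact Nat.pow_le_pow_right (by norm_num) (by omega)
  · intro m hm
    rw [strongSeries_eq b hmul hzero]
    exact VV_ne_bot b (n - 2) (by omega) hm
end

section
/- Let K be an associative unital ring, h : A → B a surjective homomorphism of right K-modules, Endo(A; ker h) the subring of Endo(A) consisting of endomorphisms carrying ker(h) into itself, R a Jacobson radical subring of Endo(A), and suppose B is Hopfian as a K-module. Then R ∩ Endo(A; ker h) is a Jacobson radical ring, and its image in Endo(B) is a Jacobson radical subring of Endo(B). -/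
/-- Let `K` be an associative unital ring, `h : A → B` a surjective
homomorphism of `K`-modules, and `R` a Jacobson radical subring of `Endo(A)` (i.e. every
element of `R` has a quasiinverse in `R`).  If `B` is Hopfian as a `K`-module, then the
set of elements of `R` carrying `ker h` into itself is again a Jacobson radical ring, and
its image in `Endo(B)` (each such endomorphism of `A` inducing one of `B`) is a Jacobson
radical subring of `Endo(B)`. -/
theorem radical_inter_ker_preserving (K A B : Type*) [Ring K]
    [AddCommGroup A] [Module K A] [AddCommGroup B] [Module K B]
    (h : A →ₗ[K] B) (hs : Function.Surjective h)
    (R : NonUnitalSubring (Module.End K A))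
    (hrad : ∀ r ∈ R, ∃ s ∈ R, r + s + r * s = 0 ∧ r + s + s * r = 0)
    (hhopf : ∀ g : B →ₗ[K] B, Function.Surjective g → Function.Injective g) :
    -- `R ∩ Endo(A; ker h)` is a radical ring:
    (∀ r ∈ R, (∀ a : A, h a = 0 → h (r a) = 0) →
      ∃ s ∈ R, (∀ a : A, h a = 0 → h (s a) = 0) ∧
        r + s + r * s = 0 ∧ r + s + s * r = 0) ∧
    -- and its image in `Endo(B)` is a radical subring of `Endo(B)`:
    (∀ r' : Module.End K B,
      (∃ r ∈ R, (∀ a : A, h a = 0 → h (r a) = 0) ∧ ∀ a : A, r' (h a) = h (r a)) →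
      ∃ s' : Module.End K B,
        (∃ s ∈ R, (∀ a : A, h a = 0 → h (s a) = 0) ∧ ∀ a : A, s' (h a) = h (s a)) ∧
        r' + s' + r' * s' = 0 ∧ r' + s' + s' * r' = 0) := by
  classical
  set e := h.quotKerEquivOfSurjective hs with he
  have he_mk : ∀ a : A, e (Submodule.Quotient.mk a) = h a := by
    intro a
    simp [he, LinearMap.quotKerEquivOfSurjective, LinearMap.quotKerEquivRange]
  -- induced endomorphism on B
  have induce : ∀ f : Module.End K A, (∀ a : A, h a = 0 → h (f a) = 0) →
      ∃ f' : Module.End K B, ∀ a : A, f' (h a) = h (f a) := by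
    intro f hf
    have hle : LinearMap.ker h ≤ LinearMap.ker (h ∘ₗ f) := by
      intro x hx
      simp only [LinearMap.mem_ker] at hx ⊢
      exact hf x hx
    refine ⟨((LinearMap.ker h).liftQ (h ∘ₗ f) hle) ∘ₗ e.symm.toLinearMap, ?_⟩
    intro a
    have hsymm : e.symm (h a) = Submodule.Quotient.mk a := by
      rw [LinearEquiv.symm_apply_eq, he_mk]
    simp [LinearMap.comp_apply, hsymm]
  -- key: the quasiinverse of a ker-preserving element is ker-preserving
  have key : ∀ r ∈ R, (∀ a : A, h a = 0 → h (r a) = 0) →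
      ∃ s ∈ R, (∀ a : A, h a = 0 → h (s a) = 0) ∧
        r + s + r * s = 0 ∧ r + s + s * r = 0 := by
    intro r hrR hrk
    obtain ⟨s, hsR, h1, h2⟩ := hrad r hrR
    have e1 : ((1 + r) * (1 + s) : Module.End K A) = 1 := by
      have : ((1 + r) * (1 + s) : Module.End K A) = 1 + (r + s + r * s) := by
        noncomm_ring
      rw [this, h1, add_zero]
    have hk1 : ∀ a : A, h a = 0 → h ((1 + r : Module.End K A) a) = 0 := by
      intro a ha
      have : ((1 + r : Module.End K A) a) = a + r a := by
        simp [LinearMap.add_apply]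
      rw [this, map_add, ha, hrk a ha, add_zero]
    obtain ⟨g, hg⟩ := induce (1 + r) hk1
    have hgsurj : Function.Surjective g := by
      intro b
      obtain ⟨a, rfl⟩ := hs b
      refine ⟨h ((1 + s : Module.End K A) a), ?_⟩
      rw [hg]
      have : ((1 + r : Module.End K A) ((1 + s : Module.End K A) a))
          = ((1 + r) * (1 + s) : Module.End K A) a := rfl
      rw [this, e1]
      rfl
    have hginj : Function.Injective g := hhopf g hgsurj
    refine ⟨s, hsR, ?_, h1, h2⟩
    intro a ha
    have h1s : h ((1 + s : Module.End K A) a) = 0 := by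
      apply hginj
      rw [hg, map_zero]
      have : ((1 + r : Module.End K A) ((1 + s : Module.End K A) a))
          = ((1 + r) * (1 + s) : Module.End K A) a := rfl
      rw [this, e1]
      simpa using ha
    have : s a = (1 + s : Module.End K A) a - a := by
      simp [LinearMap.add_apply]
    rw [this, map_sub, h1s, ha, sub_zero]
  refine ⟨key, ?_⟩
  rintro r' ⟨r, hrR, hrk, hr'⟩
  obtain ⟨s, hsR, hsk, h1, h2⟩ := key r hrR hrk
  obtain ⟨s', hs'⟩ := induce s hsk
  refine ⟨s', ⟨s, hsR, hsk, hs'⟩, ?_, ?_⟩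
  · ext b
    obtain ⟨a, rfl⟩ := hs b
    have hz : h ((r + s + r * s : Module.End K A) a) = 0 := by
      rw [h1]; simp
    simp only [LinearMap.add_apply, Module.End.mul_apply, LinearMap.zero_apply]
    rw [hr', hs', hr' (s a)]
    simpa [LinearMap.add_apply, Module.End.mul_apply] using hz
  · ext b
    obtain ⟨a, rfl⟩ := hs b
    have hz : h ((r + s + s * r : Module.End K A) a) = 0 := by
      rw [h2]; simp
    simp only [LinearMap.add_apply, Module.End.mul_apply, LinearMap.zero_apply]
    rw [hr', hs', hs' (r a)]
    simpa [LinearMap.add_apply, Module.End.mul_apply] using hz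
end

section
/- A Jacobson radical associative k-algebra B cannot contain a nonzero finitely generated idempotent subalgebra S = S². -/
section Aux

variable {k B : Type*} [CommRing k] [NonUnitalRing B] [Module k B]
  [SMulCommClass k B B] [IsScalarTower k B B]

/-- The `k`-span of `B * s`. -/
def auxP (k : Type*) {B : Type*} [CommRing k] [NonUnitalRing B] [Module k B]
    (s : Set B) : Submodule k B :=
  Submodule.span k {z : B | ∃ b : B, ∃ y ∈ s, z = b * y}

theorem aux_mul_mem_P (s : Set B) (c m : B) (hm : m ∈ auxP k s) : c * m ∈ auxP k s := by
  induction hm using Submodule.span_induction with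
  | mem z hz =>
    obtain ⟨b, y, hy, rfl⟩ := hz
    exact Submodule.subset_span ⟨c * b, y, hy, (mul_assoc c b y).symm⟩
  | zero => simpa using (auxP k s).zero_mem
  | add x y _ _ hx hy => rw [mul_add]; exact add_mem hx hy
  | smul t x _ hx => rw [mul_smul_comm]; exact Submodule.smul_mem _ _ hx

theorem aux_elim {a b c y : B} (hc : -b + c + c * (-b) = 0) (ha : a = b * a + y) :
    a = c * y + y := by
  have hc' : c = b + c * b := by
    rw [← sub_eq_zero]
    calc c - (b + c * b) = -b + c + c * (-b) := by rw [mul_neg]; abel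
    _ = 0 := hc
  have h1 : c * a = c * (b * a) + c * y := by
    conv_lhs => rw [ha]
    rw [mul_add]
  have h2 : c * a = b * a + c * (b * a) := by
    conv_lhs => rw [hc']
    rw [add_mul, mul_assoc]
  have h3 : b * a = c * y := by
    have h := h2.symm.trans h1
    rw [add_comm (c * (b * a)) (c * y)] at h
    exact (add_right_cancel h)
  calc a = b * a + y := ha
  _ = c * y + y := by rw [h3]

theorem aux_nakayama
    (hrad : ∀ b : B, ∃ c : B, b + c + b * c = 0 ∧ b + c + c * b = 0)
    (s : Finset B) :
    (∀ x ∈ s, x ∈ auxP k (↑s : Set B)) → ∀ x ∈ s, x = 0 := by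
  induction s using Finset.cons_induction with
  | empty => intro _ x hx; simp at hx
  | @cons a s ha IH =>
    intro H
    have step1 : auxP k (↑(Finset.cons a s ha) : Set B) ≤
        LinearMap.range (LinearMap.mulRight k a) ⊔ auxP k (↑s : Set B) := by
      apply Submodule.span_le.2
      rintro z ⟨b, y, hy, rfl⟩
      rw [Finset.coe_cons, Set.mem_insert_iff] at hy
      rcases hy with rfl | hy
      · exact Submodule.mem_sup_left ⟨b, rfl⟩
      · exact Submodule.mem_sup_right (Submodule.subset_span ⟨b, y, hy, rfl⟩)
    have step2 : a ∈ auxP k (↑s : Set B) := by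
      have h := step1 (H a (Finset.mem_cons_self a s))
      rcases Submodule.mem_sup.1 h with ⟨z, hz, y, hy, hzy⟩
      obtain ⟨b, rfl⟩ := hz
      obtain ⟨c, _, hc2⟩ := hrad (-b)
      have ha' : a = c * y + y :=
        aux_elim hc2 (by simpa [LinearMap.mulRight_apply] using hzy.symm)
      rw [ha']
      exact add_mem (aux_mul_mem_P _ _ _ hy) hy
    have hle : auxP k (↑(Finset.cons a s ha) : Set B) ≤ auxP k (↑s : Set B) := by
      refine step1.trans (sup_le ?_ le_rfl)
      rintro _ ⟨b, rfl⟩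
      exact aux_mul_mem_P _ _ _ step2
    have hzero : ∀ x ∈ s, x = 0 :=
      IH fun x hx => hle (H x (Finset.mem_cons_of_mem hx))
    have hbot : auxP k (↑s : Set B) ≤ ⊥ := by
      apply Submodule.span_le.2
      rintro z ⟨b, y, hy, rfl⟩
      rw [hzero y hy, mul_zero]
      exact Submodule.zero_mem ⊥
    intro x hx
    rcases Finset.mem_cons.1 hx with rfl | hx
    · simpa using hbot step2
    · exact hzero x hx

end Aux

/-- a Jacobson radical associative `k`-algebra `B` cannot contain a nonzero
finitely generated idempotent subalgebra `S = S²`. -/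
theorem no_fg_idempotent_subalgebra (k B : Type*) [CommRing k] [NonUnitalRing B]
    [Module k B] [SMulCommClass k B B] [IsScalarTower k B B]
    (hrad : ∀ b : B, ∃ c : B, b + c + b * c = 0 ∧ b + c + c * b = 0)
    (S : NonUnitalSubalgebra k B)
    (hfg : ∃ s : Finset B, NonUnitalAlgebra.adjoin k (s : Set B) = S)
    (hidem : Submodule.span k {z : B | ∃ a ∈ S, ∃ b ∈ S, z = a * b} = S.toSubmodule) :
    S = ⊥ := by
  obtain ⟨s, rfl⟩ := hfg
  set S := NonUnitalAlgebra.adjoin k (↑s : Set B) with hS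
  set Q : Submodule k B := Submodule.span k (↑s : Set B) ⊔ auxP k (↑s : Set B) with hQ
  have hQmul : ∀ x : B, ∀ y ∈ Q, x * y ∈ auxP k (↑s : Set B) := by
    intro x y hy
    rw [hQ] at hy
    unfold auxP at hy
    rw [← Submodule.span_union] at hy
    induction hy using Submodule.span_induction with
    | mem z hz =>
      rcases hz with hz | ⟨b, w, hw, rfl⟩
      · exact Submodule.subset_span ⟨x, z, hz, rfl⟩
      · exact Submodule.subset_span ⟨x * b, w, hw, (mul_assoc x b w).symm⟩
    | zero => simpa using (auxP k (↑s : Set B)).zero_mem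
    | add u v _ _ hu hv => rw [mul_add]; exact add_mem hu hv
    | smul t u _ hu => rw [mul_smul_comm]; exact Submodule.smul_mem _ _ hu
  have hSQ : ∀ z ∈ S, z ∈ Q := by
    have : S ≤ Q.toNonUnitalSubalgebra
        (fun x y _ hy => Submodule.mem_sup_right (hQmul x y hy)) :=
      NonUnitalAlgebra.adjoin_le (fun x hx =>
        Submodule.mem_sup_left (Submodule.subset_span hx))
    exact fun z hz => this hz
  have hgen : ∀ x ∈ s, x ∈ auxP k (↑s : Set B) := by
    intro x hx
    have hxS : x ∈ S := NonUnitalAlgebra.subset_adjoin k hx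
    have hxS' : x ∈ Submodule.span k {z : B | ∃ a ∈ S, ∃ b ∈ S, z = a * b} := by
      rw [hidem]; exact hxS
    refine Submodule.span_le.2 ?_ hxS'
    rintro z ⟨a, haS, b, hbS, rfl⟩
    exact hQmul a b (hSQ b hbS)
  have hzero : ∀ x ∈ s, x = 0 := aux_nakayama hrad s hgen
  have : S ≤ ⊥ := NonUnitalAlgebra.adjoin_le (fun x hx => by
    simp [hzero x hx])
  exact le_bot_iff.1 this
end

section
/- If B is a k-module of finite length, then any Jacobson radical subalgebra R ⊆ Endo(B) is nilpotent: R^n = {0} for some n. -/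
open Submodule

section Aux

variable {k B : Type*} [CommRing k] [AddCommGroup B] [Module k B]

/-- The action of a `k`-submodule of endomorphisms on a `k`-submodule of `B`. -/
def endOp (p : Submodule k (Module.End k B)) (N : Submodule k B) : Submodule k B :=
  Submodule.span k {y | ∃ f ∈ p, ∃ x ∈ N, f x = y}

lemma mem_endOp {p : Submodule k (Module.End k B)} {N : Submodule k B}
    {f : Module.End k B} (hf : f ∈ p) {x : B} (hx : x ∈ N) : f x ∈ endOp p N :=
  Submodule.subset_span ⟨f, hf, x, hx, rfl⟩

lemma endOp_le {p : Submodule k (Module.End k B)} {N : Submodule k B} {P : Submodule k B}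
    (h : ∀ f ∈ p, ∀ x ∈ N, f x ∈ P) : endOp p N ≤ P := by
  rw [endOp, span_le]
  rintro y ⟨f, hf, x, hx, rfl⟩
  exact h f hf x hx

lemma endOp_mono_right {p : Submodule k (Module.End k B)} {N N' : Submodule k B}
    (h : N ≤ N') : endOp p N ≤ endOp p N' :=
  endOp_le fun f hf x hx => mem_endOp hf (h hx)

lemma endOp_mono_left {p q : Submodule k (Module.End k B)} {N : Submodule k B}
    (h : p ≤ q) : endOp p N ≤ endOp q N :=
  endOp_le fun f hf x hx => mem_endOp (h hf) hx

lemma endOp_sup_le {p : Submodule k (Module.End k B)} {N N' : Submodule k B} :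
    endOp p (N ⊔ N') ≤ endOp p N ⊔ endOp p N' := by
  refine endOp_le fun f hf x hx => ?_
  obtain ⟨a, ha, b, hb, rfl⟩ := Submodule.mem_sup.1 hx
  rw [map_add]
  exact add_mem (Submodule.mem_sup_left (mem_endOp hf ha))
    (Submodule.mem_sup_right (mem_endOp hf hb))

lemma endOp_endOp_le {p q : Submodule k (Module.End k B)} {N : Submodule k B} :
    endOp p (endOp q N) ≤ endOp (p * q) N := by
  refine endOp_le fun f hf x hx => ?_
  induction hx using Submodule.span_induction with
  | mem y hy =>
    obtain ⟨g, hg, z, hz, rfl⟩ := hy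
    exact mem_endOp (Submodule.mul_mem_mul hf hg) hz
  | zero => rw [map_zero]; exact zero_mem _
  | add a b _ _ ha hb => rw [map_add]; exact add_mem ha hb
  | smul c a _ ha => rw [map_smul]; exact smul_mem _ _ ha

lemma endOp_bot {p : Submodule k (Module.End k B)} : endOp p (⊥ : Submodule k B) = ⊥ :=
  le_bot_iff.1 <| endOp_le fun f _ x hx => by
    rw [Submodule.mem_bot] at hx
    rw [hx, map_zero]
    exact Submodule.zero_mem _

/-- Representation lemma: an element of `endOp p (span s)` is a sum of `c x • x` with
coefficients in `p`. -/
lemma endOp_span_rep {p : Submodule k (Module.End k B)} {s : Finset B} {m : B}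
    (hm : m ∈ endOp p (span k (s : Set B))) :
    ∃ c : B → Module.End k B, (∀ x, c x ∈ p) ∧ m = ∑ x ∈ s, c x x := by
  induction hm using Submodule.span_induction with
  | mem y hy =>
    obtain ⟨f, hf, x, hx, rfl⟩ := hy
    obtain ⟨g, hg⟩ := mem_span_finset.1 hx
    refine ⟨fun z => g z • f, fun z => Submodule.smul_mem _ _ hf, ?_⟩
    rw [← hg.2, map_sum]
    exact Finset.sum_congr rfl fun i _ => by
      rw [LinearMap.smul_apply, map_smul]
  | zero => exact ⟨0, fun x => zero_mem _, by simp⟩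
  | add a b _ _ ha hb =>
    obtain ⟨c, hc, rfl⟩ := ha
    obtain ⟨c', hc', rfl⟩ := hb
    refine ⟨c + c', fun x => add_mem (hc x) (hc' x), ?_⟩
    rw [← Finset.sum_add_distrib]
    exact Finset.sum_congr rfl fun i _ => by simp
  | smul a x _ hx =>
    obtain ⟨c, hc, rfl⟩ := hx
    refine ⟨a • c, fun x => Submodule.smul_mem _ _ (hc x), ?_⟩
    rw [Finset.smul_sum]
    exact Finset.sum_congr rfl fun i _ => by
      simp [LinearMap.smul_apply]

/-- Nakayama-style lemma for quasi-regular submodules of endomorphisms. -/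
lemma endOp_nakayama (Rs : Submodule k (Module.End k B)) (hmul : Rs * Rs ≤ Rs)
    (hrad : ∀ r ∈ Rs, ∃ u ∈ Rs, r + u + u * r = 0) :
    ∀ (n : ℕ) (s : Finset B), s.card = n →
      span k (s : Set B) ≤ endOp Rs (span k (s : Set B)) → span k (s : Set B) = ⊥ := by
  intro n
  induction n with
  | zero =>
    intro s hcard _
    rw [Finset.card_eq_zero] at hcard
    subst hcard
    simp
  | succ n ih =>
    classical
    intro s hcard hle
    have hs : s.Nonempty := Finset.card_pos.1 (by omega)
    obtain ⟨m, hm⟩ := hs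
    set t : Finset B := s.erase m with ht
    set M' : Submodule k B := span k (t : Set B) with hM'
    have hins : insert m t = s := Finset.insert_erase hm
    -- write `m` as a combination with coefficients in `Rs`
    have hmmem : m ∈ endOp Rs (span k (s : Set B)) := hle (subset_span hm)
    obtain ⟨c, hc, hsum⟩ := endOp_span_rep hmmem
    rw [← hins, Finset.sum_insert (Finset.notMem_erase m s)] at hsum
    set r : Module.End k B := c m with hr
    have hw : ((1 : Module.End k B) - r) m = ∑ x ∈ t, c x x := by
      rw [LinearMap.sub_apply, Module.End.one_apply, sub_eq_iff_eq_add']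
      exact hsum
    obtain ⟨u, hu, hur⟩ := hrad (-r) (neg_mem (hc m))
    have h1 : u * r = u - r := by
      rw [mul_neg] at hur
      rw [← sub_eq_zero]
      rw [show u * r - (u - r) = -(-r + u + -(u * r)) by abel, hur, neg_zero]
    have hunit : ((1 : Module.End k B) + u) * (1 - r) = 1 := by
      rw [mul_sub, add_mul, add_mul, one_mul, one_mul, mul_one, h1]
      abel
    have hwmem : (∑ x ∈ t, c x x) ∈ endOp Rs M' :=
      sum_mem fun x hx => mem_endOp (hc x) (subset_span hx)
    have hmem : m ∈ endOp Rs M' := by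
      have hm1 : m = ((1 : Module.End k B) + u) (((1 : Module.End k B) - r) m) := by
        rw [← Module.End.mul_apply, hunit, Module.End.one_apply]
      rw [hm1, hw, LinearMap.add_apply, Module.End.one_apply]
      refine add_mem hwmem ?_
      have : u (∑ x ∈ t, c x x) ∈ endOp Rs (endOp Rs M') := mem_endOp hu hwmem
      exact endOp_mono_left hmul (endOp_endOp_le this)
    -- span s ≤ M' ⊔ endOp Rs M'
    have hMle : span k (s : Set B) ≤ M' ⊔ endOp Rs M' := by
      rw [← hins, Finset.coe_insert, span_insert]
      refine sup_le ?_ le_sup_left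
      rw [span_singleton_le_iff_mem]
      exact Submodule.mem_sup_right hmem
    have hopM : endOp Rs (span k (s : Set B)) ≤ endOp Rs M' := by
      refine le_trans (endOp_mono_right hMle) (le_trans endOp_sup_le (sup_le le_rfl ?_))
      exact le_trans endOp_endOp_le (endOp_mono_left hmul)
    have hM'le : M' ≤ endOp Rs M' := by
      refine le_trans ?_ (le_trans hle hopM)
      exact span_mono (by rw [Finset.coe_erase]; exact Set.diff_subset)
    have hcard' : t.card = n := by
      rw [ht, Finset.card_erase_of_mem hm, hcard]
      omega
    have hbot : M' = ⊥ := ih t hcard' hM'le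
    have : span k (s : Set B) ≤ ⊥ := by
      refine le_trans hle (le_trans hopM ?_)
      rw [hbot, endOp_bot]
    exact le_bot_iff.1 this

end Aux

/-- if `B` is a `k`-module of finite length, then any Jacobson radical
subalgebra `R` of `Endo(B)` (every element of `R` is quasiinvertible within `R`) is
nilpotent: `R^n = 0` for some `n ≥ 1`. -/
theorem radical_subalgebra_of_finite_length_nilpotent (k B : Type*) [CommRing k]
    [AddCommGroup B] [Module k B] (hlen : IsFiniteLength k B)
    (R : NonUnitalSubalgebra k (Module.End k B))
    (hrad : ∀ r ∈ R, ∃ s ∈ R, r + s + r * s = 0 ∧ r + s + s * r = 0) :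
    ∃ n : ℕ, 0 < n ∧ R.toSubmodule ^ n = ⊥ := by
  obtain ⟨hNoeth, hArt⟩ := isFiniteLength_iff_isNoetherian_isArtinian.mp hlen
  set Rs : Submodule k (Module.End k B) := R.toSubmodule with hRs
  have hmul : Rs * Rs ≤ Rs := Submodule.mul_le.2 fun f hf g hg =>
    R.mem_toSubmodule.2 (mul_mem (R.mem_toSubmodule.1 hf) (R.mem_toSubmodule.1 hg))
  have hrad' : ∀ r ∈ Rs, ∃ u ∈ Rs, r + u + u * r = 0 := by
    intro r hr
    obtain ⟨u, hu, _, h2⟩ := hrad r hr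
    exact ⟨u, hu, h2⟩
  -- descending chain
  set N : ℕ → Submodule k B := fun n => (endOp Rs)^[n] ⊤ with hN
  have hNsucc : ∀ n, N (n + 1) = endOp Rs (N n) := fun n =>
    Function.iterate_succ_apply' (endOp Rs) n ⊤
  have hanti : ∀ n, N (n + 1) ≤ N n := by
    intro n
    induction n with
    | zero => exact le_top
    | succ n ihn =>
      exact ((hNsucc (n + 1)).le.trans (endOp_mono_right ihn)).trans (hNsucc n).ge
  have hmono : Monotone fun n => OrderDual.toDual (N n) := by
    refine monotone_nat_of_le_succ ?_
    intro n
    exact hanti n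
  obtain ⟨n, hstab⟩ := IsArtinian.monotone_stabilizes ⟨fun n => OrderDual.toDual (N n), hmono⟩
  have heq : N (n + 1) = N n := (hstab (n + 1) (Nat.le_succ n)).symm
  -- the stabilized submodule is finitely generated, apply Nakayama
  obtain ⟨S, hS⟩ := IsNoetherian.noetherian (N n)
  have hle : span k (S : Set B) ≤ endOp Rs (span k (S : Set B)) := by
    rw [hS, ← hNsucc n, heq]
  have hbot : N n = ⊥ := by rw [← hS]; exact endOp_nakayama Rs hmul hrad' S.card S rfl hle
  -- powers of Rs map B into the chain
  have hclaim : ∀ (m : ℕ), ∀ f ∈ Rs ^ (m + 1), ∀ (j : ℕ), ∀ b ∈ N j,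
      f b ∈ N (m + 1 + j) := by
    intro m
    induction m with
    | zero =>
      intro f hf j b hb
      rw [Submodule.pow_succ, Submodule.pow_zero, Submodule.one_mul] at hf
      rw [show 0 + 1 + j = j + 1 by omega, hNsucc j]
      exact mem_endOp hf hb
    | succ m ihm =>
      intro f hf j b hb
      rw [Submodule.pow_succ] at hf
      refine Submodule.mul_induction_on
        (C := fun f => f b ∈ N (m + 1 + 1 + j)) hf ?_ ?_
      · intro g hg h hh
        have h1 : h b ∈ N (j + 1) := by
          rw [hNsucc j]; exact mem_endOp hh hb
        have h2 := ihm g hg (j + 1) (h b) h1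
        rw [show m + 1 + (j + 1) = m + 1 + 1 + j by omega] at h2
        exact h2
      · intro x y hx hy
        rw [LinearMap.add_apply]
        exact add_mem hx hy
  refine ⟨n + 1, Nat.succ_pos n, ?_⟩
  rw [eq_bot_iff]
  intro f hf
  rw [Submodule.mem_bot]
  ext b
  have := hclaim n f hf 0 b Submodule.mem_top
  rw [Nat.add_zero, heq, hbot, Submodule.mem_bot] at this
  simpa using this
end

section
/- Let R be a nonunital associative ring, A a left R-module, and n a positive integer such that for every u ∈ Mat_n(R), the element 1 + u acts injectively on the direct sum of n copies of A. Then every R-submodule C of A generated by n elements satisfying R·C = C must be zero. -/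
/-- let `R` be a nonunital associative ring, `A` a left `R`-module, and `n`
a positive integer such that for every `u ∈ Mat_n(R)`, the map `1 + u : x ↦ x + ux` acts
injectively on `A^n`.  Then every `R`-submodule `C` of `A` generated by `n` elements and
satisfying `R·C = C` is zero. -/
theorem nakayama_like (R A : Type*) [NonUnitalRing R] [AddCommGroup A] [DistribSMul R A]
    (hadd : ∀ (r s : R) (a : A), (r + s) • a = r • a + s • a)
    (hassoc : ∀ (r s : R) (a : A), (r * s) • a = r • s • a)
    (n : ℕ) (hn : 0 < n)
    (hinj : ∀ u : Matrix (Fin n) (Fin n) R,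
      Function.Injective (fun x : Fin n → A => fun i => x i + ∑ j, u i j • x j))
    (C : AddSubgroup A) (hCsmul : ∀ (r : R), ∀ c ∈ C, r • c ∈ C)
    (hgen : ∃ g : Fin n → A, (∀ i, g i ∈ C) ∧
      ∀ c ∈ C, c ∈ AddSubgroup.closure
        ({y : A | ∃ i, y = g i} ∪ {y : A | ∃ (r : R) (i : Fin n), y = r • g i}))
    (hRC : ∀ c ∈ C, c ∈ AddSubgroup.closure {y : A | ∃ (r : R), ∃ c' ∈ C, y = r • c'}) :
    C = ⊥ := by
  obtain ⟨g, hg, hgenC⟩ := hgen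
  -- `0 • a = 0`
  have h0 : ∀ a : A, (0 : R) • a = 0 := by
    intro a
    have h := hadd 0 0 a
    rw [add_zero] at h
    exact (add_eq_left.mp h.symm)
  -- `(-r) • a = -(r • a)`
  have hnegR : ∀ (r : R) (a : A), (-r) • a = -(r • a) := by
    intro r a
    have h : r • a + (-r) • a = 0 := by
      rw [← hadd, add_neg_cancel, h0]
    exact eq_neg_of_add_eq_zero_right h
  -- `r • (-a) = -(r • a)`
  have hnegA : ∀ (r : R) (a : A), r • (-a) = -(r • a) := by
    intro r a
    have h : r • a + r • (-a) = 0 := by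
      rw [← smul_add, add_neg_cancel, smul_zero]
    exact eq_neg_of_add_eq_zero_right h
  -- single-index combination
  have hsingle : ∀ (t : R) (i : Fin n),
      t • g i = ∑ j, (fun j => if j = i then t else 0) j • g j := by
    intro t i
    rw [show (∑ j, (fun j => if j = i then t else 0) j • g j)
        = ∑ j, if j = i then t • g j else 0 from
      Finset.sum_congr rfl fun j _ => by by_cases hji : j = i <;> simp [hji, h0]]
    rw [Finset.sum_ite_eq' Finset.univ i (fun j => t • g j)]
    simp
  -- Every `c ∈ C` scaled by any `r` is a combination `∑ rv j • g j`.
  have key0 : ∀ c ∈ C, ∀ r : R, ∃ rv : Fin n → R, r • c = ∑ j, rv j • g j := by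
    intro c hc
    refine AddSubgroup.closure_induction ?_ ?_ ?_ ?_ (hgenC c hc)
    · rintro y (⟨i, rfl⟩ | ⟨s, i, rfl⟩) r
      · exact ⟨fun j => if j = i then r else 0, hsingle r i⟩
      · exact ⟨fun j => if j = i then r * s else 0, by
          rw [← hsingle (r * s) i, hassoc]⟩
    · intro r
      exact ⟨0, by simp [h0, smul_zero]⟩
    · intro a b _ _ ha hb r
      obtain ⟨ra, hra⟩ := ha r
      obtain ⟨rb, hrb⟩ := hb r
      refine ⟨fun j => ra j + rb j, ?_⟩
      rw [smul_add, hra, hrb, ← Finset.sum_add_distrib]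
      exact Finset.sum_congr rfl fun j _ => (hadd (ra j) (rb j) (g j)).symm
    · intro a _ ha r
      obtain ⟨ra, hra⟩ := ha r
      refine ⟨fun j => -ra j, ?_⟩
      rw [hnegA, hra, ← Finset.sum_neg_distrib]
      exact Finset.sum_congr rfl fun j _ => (hnegR (ra j) (g j)).symm
  -- Every `c ∈ C` itself is such a combination (via `R·C = C`).
  have key : ∀ c ∈ C, ∃ rv : Fin n → R, c = ∑ j, rv j • g j := by
    intro c hc
    refine AddSubgroup.closure_induction ?_ ?_ ?_ ?_ (hRC c hc)
    · rintro y ⟨r, c', hc', rfl⟩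
      exact key0 c' hc' r
    · exact ⟨0, by simp [h0]⟩
    · rintro a b _ _ ⟨ra, rfl⟩ ⟨rb, rfl⟩
      refine ⟨fun j => ra j + rb j, ?_⟩
      rw [← Finset.sum_add_distrib]
      exact Finset.sum_congr rfl fun j _ => (hadd (ra j) (rb j) (g j)).symm
    · rintro a _ ⟨ra, rfl⟩
      refine ⟨fun j => -ra j, ?_⟩
      rw [← Finset.sum_neg_distrib]
      exact Finset.sum_congr rfl fun j _ => (hnegR (ra j) (g j)).symm
  -- get the matrix `v` with `g i = ∑ j, v i j • g j`
  choose v hv using fun i => key (g i) (hg i)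
  -- apply injectivity with `u = -v`
  have hgzero : g = 0 := by
    apply hinj (fun i j => -(v i j))
    funext i
    simp only
    rw [show (∑ j, -(v i j) • g j) = -∑ j, v i j • g j by
      rw [← Finset.sum_neg_distrib]
      exact Finset.sum_congr rfl fun j _ => hnegR (v i j) (g j)]
    rw [← hv i]
    simp [smul_zero]
  -- conclude `C = ⊥`
  apply le_antisymm _ bot_le
  intro c hc
  have := hgenC c hc
  have hsub : ({y : A | ∃ i, y = g i} ∪ {y : A | ∃ (r : R) (i : Fin n), y = r • g i})
      ⊆ (⊥ : AddSubgroup A) := by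
    rintro y (⟨i, rfl⟩ | ⟨r, i, rfl⟩) <;>
      simp [hgzero, smul_zero]
  exact (AddSubgroup.closure_le ⊥).mpr hsub this
end
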